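/- Let Z be a positive integer with Z ≤ n and suppose the eigen-gap μ_Z − μ_{Z+1} > 0. If an encoder E ∈ ℝ^{Z×n} and decoder D ∈ ℝ^{n×Z} satisfy Tr(K(I − DE) Ψ (I − DE)ᵀ Kᵀ) = Σ_{i=Z+1}^{n} μᵢ, then the column space of Eᵀ equals the span of {L^{−ᵀ}u₁, L^{−ᵀ}u₂, …, L^{−ᵀ}u_Z}. -/

import Mathlib

open Matrix

set_option maxHeartbeats 1000000

/-- task-aware PCA, uniqueness of the optimal encoder: if the
eigen-gap `μ_Z - μ_{Z+1} > 0` and an encoder/decoder pair attains the optimal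
loss `μ_{Z+1} + ⋯ + μ_n`, then the column space of `Eᵀ` equals the span of
`{L⁻ᵀ u₁, …, L⁻ᵀ u_Z}`. -/
theorem task_aware_pca_optimal_encoder
    (n m Z : ℕ) (hn : 0 < n) (hm : 0 < m) (hZ : 0 < Z) (hZn : Z ≤ n)
    (Ψ L : Matrix (Fin n) (Fin n) ℝ) (hΨ : Ψ.PosDef) (hChol : Ψ = L * Lᵀ)
    (hLtri : ∀ i j : Fin n, i < j → L i j = 0) (hLdiag : ∀ i : Fin n, 0 < L i i)
    (K : Matrix (Fin m) (Fin n) ℝ)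
    (μ : ℕ → ℝ) (u : Fin n → (Fin n → ℝ))
    (hdesc : ∀ i : ℕ, 1 ≤ i → i < n → μ (i + 1) ≤ μ i)
    (hzero : μ (n + 1) = 0)
    (horth : ∀ i j : Fin n, dotProduct (u i) (u j) = if i = j then 1 else 0)
    (heig : ∀ i : Fin n, (Lᵀ * Kᵀ * K * L).mulVec (u i) = μ ((i : ℕ) + 1) • u i)
    (hgap : 0 < μ Z - μ (Z + 1))
    (E : Matrix (Fin Z) (Fin n) ℝ) (D : Matrix (Fin n) (Fin Z) ℝ)
    (hopt : (K * (1 - D * E) * Ψ * (1 - D * E)ᵀ * Kᵀ).trace =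
      ∑ i ∈ Finset.Icc (Z + 1) n, μ i) :
    LinearMap.range (Matrix.toLin' Eᵀ) =
      Submodule.span ℝ ((fun i : Fin n => (Lᵀ)⁻¹.mulVec (u i)) ''
        {i : Fin n | (i : ℕ) < Z}) := by
  classical
  -- L is invertible
  have hLdet : IsUnit L.det := by
    have h := hΨ.det_pos
    rw [hChol, Matrix.det_mul, Matrix.det_transpose] at h
    exact isUnit_iff_ne_zero.mpr (by nlinarith)
  have hLTdet : IsUnit (Lᵀ).det := by rwa [Matrix.det_transpose]
  set S : Matrix (Fin n) (Fin n) ℝ := Lᵀ * Kᵀ * K * L with hSdef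
  set M : Matrix (Fin n) (Fin n) ℝ := L⁻¹ * (D * E) * L with hMdef
  set ν : Fin n → ℝ := fun j => μ ((j : ℕ) + 1) with hνdef
  set w : Fin n → (Fin n → ℝ) := fun j => (1 - M)ᵀ.mulVec (u j) with hwdef
  -- Step 1 : rewrite the loss
  have h1M : (1 : Matrix (Fin n) (Fin n) ℝ) - M = L⁻¹ * (1 - D * E) * L := by
    rw [hMdef, Matrix.mul_sub, Matrix.sub_mul, Matrix.mul_one,
      Matrix.nonsing_inv_mul _ hLdet]
  have step1 : (K * (1 - D * E) * Ψ * (1 - D * E)ᵀ * Kᵀ).trace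
      = ((1 - M)ᵀ * S * (1 - M)).trace := by
    have tkey : (1 - M)ᵀ * S * (1 - M)
        = (Lᵀ * ((1 - D * E)ᵀ * Kᵀ)) * (K * ((1 - D * E) * L)) := by
      rw [h1M, hSdef]
      simp only [Matrix.transpose_mul, Matrix.transpose_nonsing_inv, Matrix.mul_assoc]
      rw [Matrix.nonsing_inv_mul_cancel_left _ _ hLTdet,
        Matrix.mul_nonsing_inv_cancel_left _ _ hLdet]
    calc (K * (1 - D * E) * Ψ * (1 - D * E)ᵀ * Kᵀ).trace
        = ((K * ((1 - D * E) * L)) * (Lᵀ * ((1 - D * E)ᵀ * Kᵀ))).trace := by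
          rw [hChol]; congr 1; simp only [Matrix.mul_assoc]
      _ = ((Lᵀ * ((1 - D * E)ᵀ * Kᵀ)) * (K * ((1 - D * E) * L))).trace :=
          Matrix.trace_mul_comm _ _
      _ = ((1 - M)ᵀ * S * (1 - M)).trace := by rw [tkey]
  -- Step 2 : expand the trace in the eigenbasis
  set U : Matrix (Fin n) (Fin n) ℝ := Matrix.of (fun i j => u j i) with hUdef
  have hUtU : Uᵀ * U = 1 := by
    ext i j
    have := horth i j
    simpa [Matrix.mul_apply, Matrix.one_apply, hUdef, dotProduct] using this
  have hUUt : U * Uᵀ = 1 := mul_eq_one_comm.mp hUtU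
  have hSU : S * U = U * Matrix.diagonal ν := by
    ext i j
    have h := congrFun (heig j) i
    simp only [Matrix.mulVec, dotProduct, Pi.smul_apply, smul_eq_mul] at h
    rw [Matrix.mul_diagonal]
    simp only [Matrix.mul_apply, hUdef, Matrix.of_apply]
    rw [h]
    simp only [hνdef]
    ring
  have hSspec : S = U * Matrix.diagonal ν * Uᵀ := by
    calc S = S * (U * Uᵀ) := by rw [hUUt, Matrix.mul_one]
    _ = (S * U) * Uᵀ := (Matrix.mul_assoc S U Uᵀ).symm
    _ = U * Matrix.diagonal ν * Uᵀ := by rw [hSU]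
  have step2 : ((1 - M)ᵀ * S * (1 - M)).trace
      = ∑ j : Fin n, ν j * (w j ⬝ᵥ w j) := by
    set C : Matrix (Fin n) (Fin n) ℝ := (1 - M)ᵀ * U with hCdef
    have hC : ∀ i j, C i j = w j i := by
      intro i j
      simp [hCdef, hUdef, Matrix.mul_apply, hwdef, Matrix.mulVec, dotProduct]
    have hform : (1 - M)ᵀ * S * (1 - M) = C * Matrix.diagonal ν * Cᵀ := by
      rw [hSspec, hCdef]
      simp only [Matrix.transpose_mul, Matrix.transpose_transpose, Matrix.mul_assoc]
    rw [hform]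
    have hentry : ∀ i : Fin n, (C * Matrix.diagonal ν * Cᵀ) i i
        = ∑ j : Fin n, C i j * ν j * C i j := by
      intro i
      rw [Matrix.mul_apply]
      exact Finset.sum_congr rfl fun j _ => by
        rw [Matrix.mul_diagonal, Matrix.transpose_apply]
    have : (C * Matrix.diagonal ν * Cᵀ).trace
        = ∑ i : Fin n, ∑ j : Fin n, C i j * ν j * C i j := by
      rw [Matrix.trace]
      exact Finset.sum_congr rfl fun i _ => by rw [Matrix.diag_apply, hentry i]
    rw [this, Finset.sum_comm]
    refine Finset.sum_congr rfl fun j _ => ?_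
    simp only [hC]
    rw [dotProduct, Finset.mul_sum]
    exact Finset.sum_congr rfl fun i _ => by ring
  -- Step 3 : reindex the optimal value
  have step3 : ∑ i ∈ Finset.Icc (Z + 1) n, μ i
      = ∑ j : Fin n, (if Z ≤ (j : ℕ) then ν j else 0) := by
    have h4 : ∑ j : Fin n, (if Z ≤ (j : ℕ) then ν j else 0)
        = ∑ i ∈ Finset.range n, (if Z ≤ i then μ (i + 1) else 0) :=
      Fin.sum_univ_eq_sum_range (fun i : ℕ => if Z ≤ i then μ (i + 1) else 0) n
    rw [h4, ← Finset.sum_filter]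
    have h2 : (Finset.range n).filter (fun i => Z ≤ i) = Finset.Ico Z n := by
      ext i; simp [Finset.mem_filter, Finset.mem_range, Finset.mem_Ico]; omega
    have h3 : Finset.Icc (Z + 1) n = (Finset.Ico Z n).image (· + 1) := by
      ext i; simp [Finset.mem_Icc, Finset.mem_Ico]
    rw [h2, h3, Finset.sum_image (fun a _ b _ h => by omega)]
  -- eigenvalues are nonnegative
  have hν0 : ∀ j : Fin n, 0 ≤ ν j := by
    intro j
    have h0 : S = (K * L)ᵀ * (K * L) := by
      rw [hSdef, Matrix.transpose_mul, Matrix.mul_assoc]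
    have h1 : u j ⬝ᵥ (S *ᵥ u j) = ν j := by
      rw [hSdef, heig j, dotProduct_smul, horth j j]
      simp [hνdef]
    have h2 : u j ⬝ᵥ (S *ᵥ u j) = ((K * L) *ᵥ u j) ⬝ᵥ ((K * L) *ᵥ u j) := by
      rw [h0, ← Matrix.mulVec_mulVec, dotProduct_mulVec, Matrix.vecMul_transpose]
    rw [← h1, h2]
    exact Finset.sum_nonneg fun i _ => mul_self_nonneg _
  -- eigenvalues are descending (as a chain)
  have hchain : ∀ a b : ℕ, 1 ≤ a → a ≤ b → b ≤ n → μ b ≤ μ a := by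
    intro a b ha
    induction b with
    | zero => intro hab _; exact absurd (ha.trans hab) (by omega)
    | succ k ih =>
      intro hab hkn
      rcases Nat.lt_or_ge a (k + 1) with h | h
      · exact le_trans (hdesc k (by omega) (by omega)) (ih (by omega) (by omega))
      · have : a = k + 1 := by omega
        rw [this]
  -- μ (Z+1) is nonnegative
  have hc0 : 0 ≤ μ (Z + 1) := by
    rcases eq_or_lt_of_le hZn with h | h
    · rw [h, hzero]
    · exact hν0 ⟨Z, h⟩
  -- Now move to the Euclidean space picture.
  set uE : Fin n → EuclideanSpace ℝ (Fin n) :=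
    fun j => (WithLp.equiv 2 (Fin n → ℝ)).symm (u j) with huEdef
  have hinner : ∀ i j : Fin n, (inner ℝ (uE i) (uE j) : ℝ) = if i = j then 1 else 0 := by
    intro i j
    rw [← horth i j]
    simp [huEdef, PiLp.inner_apply, RCLike.inner_apply, dotProduct, mul_comm]
  have hON : Orthonormal ℝ uE := by
    rw [orthonormal_iff_ite]
    exact hinner
  haveI : Nonempty (Fin n) := ⟨⟨0, hn⟩⟩
  have hcard : Fintype.card (Fin n) = Module.finrank ℝ (EuclideanSpace ℝ (Fin n)) := by
    simp
  let b : OrthonormalBasis (Fin n) ℝ (EuclideanSpace ℝ (Fin n)) :=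
    (basisOfLinearIndependentOfCardEqFinrank hON.linearIndependent hcard).toOrthonormalBasis
      (by rwa [coe_basisOfLinearIndependentOfCardEqFinrank])
  have hb : ∀ j, b j = uE j := fun j => by
    simp [b, Module.Basis.coe_toOrthonormalBasis, coe_basisOfLinearIndependentOfCardEqFinrank]
  -- the subspace V = column space of LᵀEᵀ
  set T : EuclideanSpace ℝ (Fin Z) →ₗ[ℝ] EuclideanSpace ℝ (Fin n) :=
    Matrix.toEuclideanLin (Lᵀ * Eᵀ) with hTdef
  set V : Submodule ℝ (EuclideanSpace ℝ (Fin n)) := LinearMap.range T with hVdef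
  have hdimV : Module.finrank ℝ V ≤ Z := by
    have h := LinearMap.finrank_range_le T
    simpa using h
  have hmemV : ∀ v : Fin n → ℝ,
      ((WithLp.equiv 2 (Fin n → ℝ)).symm v ∈ V ↔
        ∃ y : Fin Z → ℝ, (Lᵀ * Eᵀ) *ᵥ y = v) := by
    intro v
    constructor
    · rintro ⟨y, hy⟩
      refine ⟨WithLp.equiv 2 (Fin Z → ℝ) y, ?_⟩
      have := congrArg (WithLp.equiv 2 (Fin n → ℝ)) hy
      simpa [hTdef, Matrix.toEuclideanLin_apply] using this
    · rintro ⟨y, hy⟩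
      refine ⟨(WithLp.equiv 2 (Fin Z → ℝ)).symm y, ?_⟩
      rw [hTdef]
      exact (Matrix.toEuclideanLin_apply_piLp_toLp _ y).trans (congrArg _ hy)
  haveI : FiniteDimensional ℝ V := inferInstance
  -- projection facts
  set t : Fin n → ℝ := fun j => ‖V.orthogonalProjectionOnto (uE j)‖ ^ 2 with htdef
  have hnormu : ∀ j, ‖uE j‖ = 1 := hON.1
  have ht0 : ∀ j, 0 ≤ t j := fun j => sq_nonneg _
  have hpyth : ∀ x : EuclideanSpace ℝ (Fin n),
      ‖x‖ ^ 2 = ‖V.orthogonalProjectionOnto x‖ ^ 2 + ‖Vᗮ.orthogonalProjectionOnto x‖ ^ 2 :=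
    fun x => Submodule.norm_sq_eq_add_norm_sq_projection x V
  have ht1 : ∀ j, t j ≤ 1 := by
    intro j
    have h := hpyth (uE j)
    rw [hnormu j] at h
    have h2 := sq_nonneg ‖Vᗮ.orthogonalProjectionOnto (uE j)‖
    simp only [htdef]
    nlinarith
  -- (1 - Mᵀ) u j is at distance at least dist(u j, V) from ... : lower bound
  have hMTfact : ∀ x : Fin n → ℝ, ∃ y : Fin Z → ℝ, (Lᵀ * Eᵀ) *ᵥ y = Mᵀ *ᵥ x := by
    intro x
    refine ⟨(Dᵀ * L⁻¹ᵀ) *ᵥ x, ?_⟩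
    rw [Matrix.mulVec_mulVec]
    congr 1
    rw [hMdef]
    simp only [Matrix.transpose_mul, Matrix.mul_assoc]
  have hwE : ∀ j : Fin n, (WithLp.equiv 2 (Fin n → ℝ)).symm (w j)
      = uE j - (WithLp.equiv 2 (Fin n → ℝ)).symm (Mᵀ *ᵥ u j) := by
    intro j
    have h : w j = u j - Mᵀ *ᵥ u j := by
      rw [hwdef]
      simp [Matrix.transpose_sub, Matrix.transpose_one, Matrix.sub_mulVec, Matrix.one_mulVec]
    rw [h]
    rfl
  have hwge : ∀ j : Fin n, 1 - t j ≤ w j ⬝ᵥ w j := by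
    intro j
    obtain ⟨y, hy⟩ := hMTfact (u j)
    have hvmem : (WithLp.equiv 2 (Fin n → ℝ)).symm (Mᵀ *ᵥ u j) ∈ V :=
      (hmemV _).mpr ⟨y, hy⟩
    set wE : EuclideanSpace ℝ (Fin n) := (WithLp.equiv 2 (Fin n → ℝ)).symm (w j) with hwEdef
    have h1 : w j ⬝ᵥ w j = ‖wE‖ ^ 2 := by
      rw [← real_inner_self_eq_norm_sq]
      rw [real_inner_self_eq_norm_sq, hwEdef, EuclideanSpace.norm_sq_eq]; simp [dotProduct, sq]
    have hz : Vᗮ.orthogonalProjectionOnto ((WithLp.equiv 2 (Fin n → ℝ)).symm (Mᵀ *ᵥ u j)) = 0 :=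
      Submodule.orthogonalProjectionOnto_apply_of_mem_orthogonal (V.le_orthogonal_orthogonal hvmem)
    have h2 : Vᗮ.orthogonalProjectionOnto wE = Vᗮ.orthogonalProjectionOnto (uE j) := by
      rw [hwEdef, hwE j, map_sub, hz, sub_zero]
    have h2' : ‖Vᗮ.orthogonalProjectionOnto wE‖ = ‖Vᗮ.orthogonalProjectionOnto (uE j)‖ := by
      rw [h2]
    have h3 := hpyth wE
    rw [h2'] at h3
    have h4 := hpyth (uE j)
    rw [hnormu j] at h4
    rw [h1]
    have h5 := sq_nonneg ‖V.orthogonalProjectionOnto wE‖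
    simp only [htdef]
    linarith [h3, h4, h5]
  -- sum of t j is at most Z
  have hsumt : ∑ j : Fin n, t j ≤ (Z : ℝ) := by
    set e := stdOrthonormalBasis ℝ V with hedef
    have htj : ∀ j, t j = ∑ k : Fin (Module.finrank ℝ V),
        (inner ℝ (uE j) ((e k : EuclideanSpace ℝ (Fin n))) : ℝ) ^ 2 := by
      intro j
      have h1 : t j = (inner ℝ (V.orthogonalProjectionOnto (uE j))
          (V.orthogonalProjectionOnto (uE j)) : ℝ) := by
        rw [real_inner_self_eq_norm_sq, htdef]
      rw [h1, ← e.sum_inner_mul_inner]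
      refine Finset.sum_congr rfl fun k _ => ?_
      rw [Submodule.inner_orthogonalProjectionOnto_eq_of_mem_right,
        Submodule.inner_orthogonalProjectionOnto_eq_of_mem_left,
        real_inner_comm ((e k : EuclideanSpace ℝ (Fin n))) (uE j)]
      ring
    have hswap : ∑ j : Fin n, t j = ∑ k : Fin (Module.finrank ℝ V), ∑ j : Fin n,
        (inner ℝ (uE j) ((e k : EuclideanSpace ℝ (Fin n))) : ℝ) ^ 2 := by
      simp only [htj]
      exact Finset.sum_comm
    have hpars : ∀ k : Fin (Module.finrank ℝ V), ∑ j : Fin n,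
        (inner ℝ (uE j) ((e k : EuclideanSpace ℝ (Fin n))) : ℝ) ^ 2 = 1 := by
      intro k
      have h := b.sum_inner_mul_inner ((e k : EuclideanSpace ℝ (Fin n)))
        ((e k : EuclideanSpace ℝ (Fin n)))
      have h2 : (inner ℝ ((e k : EuclideanSpace ℝ (Fin n)))
          ((e k : EuclideanSpace ℝ (Fin n))) : ℝ) = 1 := by
        rw [real_inner_self_eq_norm_sq, ← Submodule.coe_norm,
          (stdOrthonormalBasis ℝ V).orthonormal.1 k]
        norm_num
      rw [← h2, ← h]
      refine Finset.sum_congr rfl fun j _ => ?_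
      rw [hb j, real_inner_comm ((e k : EuclideanSpace ℝ (Fin n))) (uE j)]
      ring
    calc ∑ j : Fin n, t j = ∑ _k : Fin (Module.finrank ℝ V), (1 : ℝ) := by
          rw [hswap]
          exact Finset.sum_congr rfl fun k _ => hpars k
      _ = (Module.finrank ℝ V : ℝ) := by simp
      _ ≤ (Z : ℝ) := by exact_mod_cast hdimV
  -- arithmetic: extract t j = 1 for j < Z
  set c : ℝ := μ (Z + 1) with hcdef
  set g : ℝ := μ Z - μ (Z + 1) with hgdef
  have hgc : g + c = μ Z := by rw [hgdef, hcdef]; ring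
  have hgeZ : ∀ j : Fin n, Z ≤ (j : ℕ) → ν j ≤ c := fun j hj =>
    hchain (Z + 1) ((j : ℕ) + 1) (by omega) (by omega) (by omega)
  have hltZ : ∀ j : Fin n, (j : ℕ) < Z → μ Z ≤ ν j := fun j hj =>
    hchain ((j : ℕ) + 1) Z (by omega) (by omega) (by omega)
  set G : ℝ := ∑ j : Fin n, (if (j : ℕ) < Z then 1 - t j else 0) with hGdef
  have hkey : ∀ j : Fin n, ν j * t j ≤
      ((if (j : ℕ) < Z then ν j - c else 0)
        - g * (if (j : ℕ) < Z then 1 - t j else 0)) + c * t j := by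
    intro j
    by_cases hj : (j : ℕ) < Z
    · simp only [if_pos hj]
      have h1 := hltZ j hj
      have h2 := ht1 j
      nlinarith [mul_nonneg (by linarith : (0:ℝ) ≤ 1 - t j) (by linarith : (0:ℝ) ≤ ν j - μ Z)]
    · simp only [if_neg hj]
      have h1 := hgeZ j (by omega)
      nlinarith [mul_nonneg (by linarith : (0:ℝ) ≤ c - ν j) (ht0 j)]
  have hcardZ : (Finset.univ.filter fun j : Fin n => (j : ℕ) < Z).card = Z := by
    rw [Finset.card_filter]
    have h1 : ∑ j : Fin n, (if (j : ℕ) < Z then 1 else 0)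
        = ∑ i ∈ Finset.range n, (if i < Z then 1 else 0) :=
      Fin.sum_univ_eq_sum_range (fun i : ℕ => if i < Z then 1 else 0) n
    rw [h1, ← Finset.sum_filter]
    have h2 : (Finset.range n).filter (fun i => i < Z) = Finset.range Z := by
      ext i; simp [Finset.mem_filter, Finset.mem_range]; omega
    rw [h2]
    simp
  have hconstZ : ∑ j : Fin n, (if (j : ℕ) < Z then c else 0) = c * Z := by
    rw [← Finset.sum_filter, Finset.sum_const, hcardZ]
    simp [mul_comm]
  have hsum1 : ∑ j : Fin n, ν j * t j ≤
      (∑ j : Fin n, (if (j : ℕ) < Z then ν j else 0)) - c * Z - g * G + c * ∑ j : Fin n, t j := by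
    have h0 := Finset.sum_le_sum (fun j (_ : j ∈ Finset.univ) => hkey j)
    have h1 : ∑ j : Fin n, (((if (j : ℕ) < Z then ν j - c else 0)
        - g * (if (j : ℕ) < Z then 1 - t j else 0)) + c * t j)
        = (∑ j : Fin n, (if (j : ℕ) < Z then ν j - c else 0))
          - g * G + c * ∑ j : Fin n, t j := by
      rw [Finset.sum_add_distrib, Finset.sum_sub_distrib, hGdef, Finset.mul_sum, Finset.mul_sum]
    have h2 : ∑ j : Fin n, (if (j : ℕ) < Z then ν j - c else 0)
        = (∑ j : Fin n, (if (j : ℕ) < Z then ν j else 0)) - c * Z := by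
      rw [← hconstZ, ← Finset.sum_sub_distrib]
      refine Finset.sum_congr rfl fun j _ => ?_
      by_cases hj : (j : ℕ) < Z <;> simp [hj]
    rw [h1, h2] at h0
    linarith
  have hsum2 : ∑ j : Fin n, ν j * t j ≤
      (∑ j : Fin n, (if (j : ℕ) < Z then ν j else 0)) - g * G := by
    have h1 : c * ∑ j : Fin n, t j ≤ c * Z := mul_le_mul_of_nonneg_left hsumt hc0
    linarith
  have hopt' : ∑ j : Fin n, ν j * (w j ⬝ᵥ w j)
      = ∑ j : Fin n, (if Z ≤ (j : ℕ) then ν j else 0) := by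
    rw [← step2, ← step1, hopt, step3]
  have hsplit : ∑ j : Fin n, ν j = (∑ j : Fin n, (if (j : ℕ) < Z then ν j else 0))
      + ∑ j : Fin n, (if Z ≤ (j : ℕ) then ν j else 0) := by
    rw [← Finset.sum_add_distrib]
    refine Finset.sum_congr rfl fun j _ => ?_
    by_cases hj : (j : ℕ) < Z
    · simp [hj, Nat.not_le.mpr hj]
    · simp [hj, Nat.le_of_not_lt hj]
  have hlowsum : ∑ j : Fin n, ν j * (1 - t j) ≤ ∑ j : Fin n, ν j * (w j ⬝ᵥ w j) :=
    Finset.sum_le_sum fun j _ => mul_le_mul_of_nonneg_left (hwge j) (hν0 j)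
  have hexpand : ∑ j : Fin n, ν j * (1 - t j)
      = (∑ j : Fin n, ν j) - ∑ j : Fin n, ν j * t j := by
    rw [← Finset.sum_sub_distrib]
    exact Finset.sum_congr rfl fun j _ => by ring
  have hG0 : G ≤ 0 := by
    have h1 : (∑ j : Fin n, (if Z ≤ (j : ℕ) then ν j else 0)) + g * G
        ≤ ∑ j : Fin n, ν j * (w j ⬝ᵥ w j) := by
      rw [hexpand] at hlowsum
      linarith [hsum2, hsplit]
    rw [hopt'] at h1
    by_contra hcon
    push_neg at hcon
    nlinarith [mul_pos hgap hcon]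
  have ht_eq1 : ∀ j : Fin n, (j : ℕ) < Z → t j = 1 := by
    have hterm : ∀ j ∈ Finset.univ, (0:ℝ) ≤ (if ((j : Fin n) : ℕ) < Z then 1 - t j else 0) := by
      intro j _
      by_cases hj : (j : ℕ) < Z
      · simp only [if_pos hj]; linarith [ht1 j]
      · simp [hj]
    have hGeq : G = 0 := le_antisymm hG0 (hGdef ▸ Finset.sum_nonneg hterm)
    intro j hj
    have h := (Finset.sum_eq_zero_iff_of_nonneg hterm).mp (hGdef.symm.trans hGeq) j
      (Finset.mem_univ j)
    rw [if_pos hj] at h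
    linarith
  -- membership of the optimal directions in the range of Eᵀ
  have hmem : ∀ j : Fin n, (j : ℕ) < Z → ∃ y : Fin Z → ℝ, Eᵀ *ᵥ y = (Lᵀ)⁻¹ *ᵥ u j := by
    intro j hj
    have h4 := hpyth (uE j)
    rw [hnormu j] at h4
    have h1 : ‖Vᗮ.orthogonalProjectionOnto (uE j)‖ ^ 2 = 0 := by
      have := ht_eq1 j hj
      simp only [htdef] at this
      linarith
    have h2 : (Vᗮ.orthogonalProjectionOnto (uE j) : EuclideanSpace ℝ (Fin n)) = 0 := by
      have h3 : ‖Vᗮ.orthogonalProjectionOnto (uE j)‖ = 0 := by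
        have := sq_eq_zero_iff.mp h1
        exact this
      rw [Submodule.coe_norm] at h3
      exact norm_eq_zero.mp h3
    have h3 : uE j ∈ V := by
      have h5 := Submodule.starProjection_add_starProjection_orthogonal (K := V) (uE j)
      rw [Submodule.starProjection_apply, Submodule.starProjection_apply, h2, add_zero] at h5
      rw [← h5]
      exact (V.orthogonalProjectionOnto (uE j)).2
    rw [huEdef] at h3
    obtain ⟨y, hy⟩ := (hmemV (u j)).mp h3
    refine ⟨y, ?_⟩
    have h6 := congrArg (fun v => (Lᵀ)⁻¹ *ᵥ v) hy
    simpa [Matrix.mulVec_mulVec, Matrix.nonsing_inv_mul_cancel_left _ _ hLTdet] using h6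
  -- final dimension count
  have hki : Function.Injective (Matrix.toLin' ((Lᵀ)⁻¹) : (Fin n → ℝ) →ₗ[ℝ] (Fin n → ℝ)) := by
    have hli : Function.LeftInverse (Matrix.toLin' Lᵀ) (Matrix.toLin' ((Lᵀ)⁻¹)) := by
      intro x
      simp only [Matrix.toLin'_apply, Matrix.mulVec_mulVec,
        Matrix.mul_nonsing_inv _ hLTdet, Matrix.one_mulVec]
    exact hli.injective
  have hLIu : LinearIndependent ℝ u :=
    hON.linearIndependent.map' (WithLp.linearEquiv 2 ℝ (Fin n → ℝ)).toLinearMap (LinearEquiv.ker _)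
  set f : {i : Fin n // (i : ℕ) < Z} → (Fin n → ℝ) := fun i => (Lᵀ)⁻¹ *ᵥ u i with hfdef
  have hLIf : LinearIndependent ℝ f := by
    have h1 : LinearIndependent ℝ (fun i : {i : Fin n // (i : ℕ) < Z} => u i) :=
      hLIu.comp _ Subtype.val_injective
    have h2 := h1.map' (Matrix.toLin' ((Lᵀ)⁻¹)) (LinearMap.ker_eq_bot.mpr hki)
    have h3 : f = (Matrix.toLin' ((Lᵀ)⁻¹)) ∘ (fun i : {i : Fin n // (i : ℕ) < Z} => u i) := by
      funext i
      simp [hfdef, Matrix.toLin'_apply]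
    rw [h3]
    exact h2
  have hrange : Set.range f
      = (fun i : Fin n => (Lᵀ)⁻¹ *ᵥ u i) '' {i : Fin n | (i : ℕ) < Z} := by
    rw [Set.image_eq_range]
    rfl
  have hcardsub : Fintype.card {i : Fin n // (i : ℕ) < Z} = Z := by
    have he : {i : Fin n // (i : ℕ) < Z} ≃ Fin Z :=
      ⟨fun x => ⟨x.1.1, x.2⟩, fun y => ⟨⟨y.1, lt_of_lt_of_le y.2 hZn⟩, y.2⟩,
        fun x => rfl, fun y => rfl⟩
    rw [Fintype.card_congr he, Fintype.card_fin]
  have hspanrank : Module.finrank ℝ (Submodule.span ℝ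
      ((fun i : Fin n => (Lᵀ)⁻¹ *ᵥ u i) '' {i : Fin n | (i : ℕ) < Z})) = Z := by
    rw [← hrange, finrank_span_eq_card hLIf, hcardsub]
  have hsub : Submodule.span ℝ ((fun i : Fin n => (Lᵀ)⁻¹ *ᵥ u i) '' {i : Fin n | (i : ℕ) < Z})
      ≤ LinearMap.range (Matrix.toLin' Eᵀ) := by
    rw [Submodule.span_le]
    rintro x ⟨i, hi, rfl⟩
    obtain ⟨y, hy⟩ := hmem i hi
    exact ⟨y, by rw [Matrix.toLin'_apply]; exact hy⟩
  have hfinE : Module.finrank ℝ (LinearMap.range (Matrix.toLin' Eᵀ)) ≤ Z := by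
    have h := LinearMap.finrank_range_le (Matrix.toLin' Eᵀ : (Fin Z → ℝ) →ₗ[ℝ] (Fin n → ℝ))
    simpa using h
  exact (Submodule.eq_of_le_of_finrank_le hsub (by rw [hspanrank]; exact hfinE)).symm
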